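/- Let G be a simple graph with an edge coloring c, let M be a rainbow matching in G of size s, and let R be a color not appearing on any edge of M. Suppose the spanning subgraph of G consisting of all edges of color R has at least 2s + 1 connected components that each contain at least one edge. Then there exists an edge e of G with c(e) = R whose endpoints are both not covered by M; in particular, M together with e is a rainbow matching of size s + 1. -/

import Mathlib

variable {V : Type*} {α : Type*}

/-- `M` is a rainbow matching in `G` under the edge coloring `c`: its elements are
edges of `G`, pairwise vertex-disjoint, and receive pairwise distinct colors. -/
def IsRainbowMatching (G : SimpleGraph V) (c : Sym2 V → α) (M : Finset (Sym2 V)) : Prop :=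
  ↑M ⊆ G.edgeSet ∧
  (∀ e ∈ M, ∀ f ∈ M, e ≠ f → ∀ v : V, v ∈ e → v ∉ f) ∧
  ∀ e ∈ M, ∀ f ∈ M, c e = c f → e = f

/-- The color degree of `v`: the number of distinct colors appearing on edges incident to `v`. -/
noncomputable def colorDegree (G : SimpleGraph V) (c : Sym2 V → α) (v : V) : ℕ :=
  (c '' G.incidenceSet v).ncard

/-- The total color degree of `G`: the sum of color degrees over all vertices. -/
noncomputable def totalColorDegree [Fintype V] (G : SimpleGraph V) (c : Sym2 V → α) : ℕ :=
  ∑ v : V, colorDegree G c v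


/-- The color class of `R`: the spanning subgraph of `G` whose edges are exactly the
edges of color `R`. -/
def colorClass (G : SimpleGraph V) (c : Sym2 V → α) (R : α) : SimpleGraph V where
  Adj a b := G.Adj a b ∧ c s(a, b) = R
  symm := by
    constructor
    intro a b h
    exact ⟨h.1.symm, by rw [Sym2.eq_swap]; exact h.2⟩
  loopless := ⟨fun a h => G.loopless.irrefl a h.1⟩

/-- If `M` is a rainbow matching of size `s` and `R` is a color not on `M` whose color
class has at least `2 * s + 1` connected components containing an edge, then some edge
`e` of color `R` has both endpoints uncovered by `M`, and `M ∪ {e}` is a rainbow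
matching of size `s + 1`. -/
theorem extend_at_many_color_class_components [Fintype V] [DecidableEq V]
    (G : SimpleGraph V) (c : Sym2 V → α)
    (M : Finset (Sym2 V)) (s : ℕ) (hM : IsRainbowMatching G c M) (hcard : M.card = s)
    (R : α) (hR : ∀ e ∈ M, c e ≠ R)
    (hcomp : 2 * s + 1 ≤
      {K : (colorClass G c R).ConnectedComponent |
        ∃ a b : V, (colorClass G c R).Adj a b ∧
          (colorClass G c R).connectedComponentMk a = K}.ncard) :
    ∃ e ∈ G.edgeSet, c e = R ∧ (∀ w : V, w ∈ e → ∀ f ∈ M, w ∉ f) ∧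
      IsRainbowMatching G c (insert e M) ∧ (insert e M).card = s + 1 := by
  classical
  set H := colorClass G c R with hH
  set S : Set V := {v | ∃ f ∈ M, v ∈ f} with hSdef
  have hScard : S.ncard ≤ 2 * s := by
    have hsub : S ⊆ ↑(M.biUnion fun e => Finset.univ.filter (· ∈ e)) := by
      rintro v ⟨f, hf, hvf⟩
      simp only [Finset.coe_biUnion, Set.mem_iUnion, Finset.mem_coe,
        Finset.mem_filter, Finset.mem_univ, true_and]
      exact ⟨f, hf, hvf⟩
    calc S.ncard ≤ (M.biUnion fun e => Finset.univ.filter (· ∈ e)).card := by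
          rw [← Set.ncard_coe_finset]
          exact Set.ncard_le_ncard hsub (Set.toFinite _)
      _ ≤ ∑ e ∈ M, (Finset.univ.filter (· ∈ e)).card := Finset.card_biUnion_le
      _ ≤ ∑ _e ∈ M, 2 := by
          refine Finset.sum_le_sum fun e _ => ?_
          induction e using Sym2.ind with
          | _ x y =>
            have : (Finset.univ.filter (· ∈ s(x, y))) ⊆ {x, y} := by
              intro w hw
              simp only [Finset.mem_filter, Sym2.mem_iff] at hw
              simp [hw.2]
            calc (Finset.univ.filter (· ∈ s(x, y))).card ≤ ({x, y} : Finset V).card :=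
                  Finset.card_le_card this
              _ ≤ 2 := Finset.card_le_two
      _ = 2 * s := by rw [Finset.sum_const, hcard]; ring
  set T : Set H.ConnectedComponent := H.connectedComponentMk '' S with hTdef
  have hTcard : T.ncard ≤ 2 * s := le_trans (Set.ncard_image_le (Set.toFinite _)) hScard
  have hnotsub : ¬ ({K : H.ConnectedComponent |
      ∃ a b : V, H.Adj a b ∧ H.connectedComponentMk a = K} ⊆ T) := by
    intro hsub
    have := Set.ncard_le_ncard hsub (Set.toFinite _)
    omega
  obtain ⟨K, hK, hKT⟩ := Set.not_subset.mp hnotsub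
  obtain ⟨a, b, hab, hKa⟩ := hK
  have hab' : G.Adj a b ∧ c s(a, b) = R := hab
  have hbK : H.connectedComponentMk b = K := by
    rw [← hKa]
    exact (SimpleGraph.ConnectedComponent.sound hab.symm.reachable)
  have haS : a ∉ S := fun h => hKT ⟨a, h, hKa⟩
  have hbS : b ∉ S := fun h => hKT ⟨b, h, hbK⟩
  refine ⟨s(a, b), hab'.1, hab'.2, ?_, ?_, ?_⟩
  · intro w hw f hf hwf
    rcases Sym2.mem_iff.mp hw with rfl | rfl
    · exact haS ⟨f, hf, hwf⟩
    · exact hbS ⟨f, hf, hwf⟩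
  · obtain ⟨hMsub, hMdisj, hMcol⟩ := hM
    refine ⟨?_, ?_, ?_⟩
    · rw [Finset.coe_insert]
      exact Set.insert_subset hab'.1 hMsub
    · intro e he f hf hef v hve hvf
      rcases Finset.mem_insert.mp he with rfl | heM
      · rcases Finset.mem_insert.mp hf with rfl | hfM
        · exact hef rfl
        · rcases Sym2.mem_iff.mp hve with rfl | rfl
          · exact haS ⟨f, hfM, hvf⟩
          · exact hbS ⟨f, hfM, hvf⟩
      · rcases Finset.mem_insert.mp hf with rfl | hfM
        · rcases Sym2.mem_iff.mp hvf with rfl | rfl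
          · exact haS ⟨e, heM, hve⟩
          · exact hbS ⟨e, heM, hve⟩
        · exact hMdisj e heM f hfM hef v hve hvf
    · intro e he f hf hc
      rcases Finset.mem_insert.mp he with rfl | heM
      · rcases Finset.mem_insert.mp hf with rfl | hfM
        · rfl
        · exact absurd (hc ▸ hab'.2 : c f = R) (hR f hfM)
      · rcases Finset.mem_insert.mp hf with rfl | hfM
        · exact absurd (hc.symm ▸ hab'.2 : c e = R) (hR e heM)
        · exact hMcol e heM f hfM hc
  · have : s(a, b) ∉ M := fun h => hR _ h hab'.2
    rw [Finset.card_insert_of_notMem this, hcard]
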